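/- In the regularised RBM construction, every pattern ξ^η = (v^η, h^η) (with h^η_α = 2δ_{αη} - 1) is a strict local minimum of the energy function: flipping any single visible or hidden spin of ξ^η strictly increases the energy (by at least 3A). -/
import Mathlib


open Finset

/-- Energy of the regularised RBM with weights `W j α = 2 A v α j`, zero visible
biases and hidden biases `c α = 2 A (λ α - V)`. -/
noncomputable def raEnergy {V H : ℕ} (A : ℝ) (lam : Fin H → ℝ)
    (v : Fin H → Fin V → ℝ) (x : Fin V → ℝ) (h : Fin H → ℝ) : ℝ :=
  -(∑ j, ∑ α, x j * (2 * A * v α j) * h α)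
    - ∑ α, (2 * A * (lam α - (V : ℝ))) * h α

/-- Overlap `S α η = v^α · v^η`. -/
noncomputable def raOverlap {V H : ℕ} (v : Fin H → Fin V → ℝ) (α η : Fin H) : ℝ :=
  ∑ j, v α j * v η j

/-- Closure under negation makes every column of the pattern matrix sum to zero. -/
lemma ra_colsum_zero {V H : ℕ} (v : Fin H → Fin V → ℝ)
    (hpm : ∀ η j, v η j = 1 ∨ v η j = -1)
    (hdist : Function.Injective v)
    (hneg : ∀ η, ∃ η', ∀ j, v η' j = -(v η j)) (j : Fin V) :
    ∑ α, v α j = 0 := by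
  classical
  set e : Fin H → Fin H := fun η => Classical.choose (hneg η) with hedef
  have he : ∀ η k, v (e η) k = -(v η k) := fun η => Classical.choose_spec (hneg η)
  have hinv : Function.Involutive e := by
    intro η; apply hdist; funext k; rw [he, he]; ring
  have h1 : ∑ α, v (e α) j = ∑ α, v α j :=
    hinv.bijective.sum_comp (fun α => v α j)
  have h2 : ∑ α, v (e α) j = -∑ α, v α j := by
    rw [← Finset.sum_neg_distrib]
    exact Finset.sum_congr rfl fun α _ => he α j
  linarith

/-- Two distinct ±1 patterns have overlap at most `V - 2`. -/
lemma ra_overlap_le {V H : ℕ} (v : Fin H → Fin V → ℝ)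
    (hpm : ∀ η j, v η j = 1 ∨ v η j = -1)
    {α η : Fin H} (hne : v α ≠ v η) :
    ∑ j, v α j * v η j ≤ (V : ℝ) - 2 := by
  classical
  obtain ⟨j1, hj1⟩ : ∃ j, v α j ≠ v η j := by
    by_contra hcon
    push_neg at hcon
    exact hne (funext hcon)
  have hS : ∑ j, v α j * v η j ≤ ∑ j : Fin V, (if j = j1 then (-1 : ℝ) else 1) := by
    refine Finset.sum_le_sum fun j _ => ?_
    by_cases h : j = j1
    · subst h
      simp only [if_pos rfl]
      rcases hpm α j with h1 | h1 <;> rcases hpm η j with h2 | h2 <;>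
        rw [h1, h2] <;> first | (exact absurd (h1.trans h2.symm) hj1) | norm_num
    · simp only [if_neg h]
      rcases hpm α j with h1 | h1 <;> rcases hpm η j with h2 | h2 <;>
        rw [h1, h2] <;> norm_num
  have hS2 : ∑ j : Fin V, (if j = j1 then (-1 : ℝ) else 1) = (V : ℝ) - 2 := by
    have : ∀ j : Fin V, (if j = j1 then (-1 : ℝ) else 1)
        = 1 - (if j = j1 then (2 : ℝ) else 0) := by
      intro j; by_cases h : j = j1 <;> simp [h] <;> norm_num
    rw [Finset.sum_congr rfl fun j _ => this j, Finset.sum_sub_distrib,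
      Finset.sum_ite_eq' Finset.univ j1 (fun _ => (2 : ℝ))]
    simp [Finset.card_univ]
  linarith

theorem regularised_patterns_are_strict_local_minima
    (V H : ℕ) (A : ℝ) (hA : 0 < A) (lam : Fin H → ℝ)
    (hlam : ∀ α, 3 / 4 < lam α ∧ lam α < 5 / 4)
    (v : Fin H → Fin V → ℝ)
    (hpm : ∀ η j, v η j = 1 ∨ v η j = -1)
    (hdist : Function.Injective v)
    (hneg : ∀ η, ∃ η', ∀ j, v η' j = -(v η j))
    (η : Fin H) :
    let hpat : Fin H → ℝ := fun β => if β = η then 1 else -1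
    -- every single visible-spin flip raises the energy by more than 3A
    (∀ j : Fin V,
      raEnergy A lam v (Function.update (v η) j (-(v η j))) hpat >
        raEnergy A lam v (v η) hpat + 3 * A) ∧
    -- every single hidden-spin flip raises the energy by more than 3A
    (∀ α : Fin H,
      raEnergy A lam v (v η) (Function.update hpat α (-(hpat α))) >
        raEnergy A lam v (v η) hpat + 3 * A) := by
  classical
  intro hpat
  have hsum : ∀ j : Fin V, ∑ α, v α j = 0 :=
    fun j => ra_colsum_zero v hpm hdist hneg j
  constructor
  · -- visible flips
    intro j0
    set x' := Function.update (v η) j0 (-(v η j0)) with hx'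
    have hsq : v η j0 * v η j0 = 1 := by
      rcases hpm η j0 with h | h <;> rw [h] <;> norm_num
    have hT : ∑ α, v α j0 * hpat α = 2 * v η j0 := by
      have hterm : ∀ α : Fin H, v α j0 * hpat α
          = (if α = η then 2 * v α j0 else 0) - v α j0 := by
        intro α
        simp only [hpat]
        by_cases h : α = η <;> simp [h] <;> ring
      rw [Finset.sum_congr rfl fun α _ => hterm α, Finset.sum_sub_distrib, hsum j0,
        Finset.sum_ite_eq' Finset.univ η (fun α => 2 * v α j0)]
      simp
    have key : raEnergy A lam v x' hpat - raEnergy A lam v (v η) hpat = 8 * A := by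
      unfold raEnergy
      have hdiff : ∑ j, ∑ α, v η j * (2 * A * v α j) * hpat α
          - ∑ j, ∑ α, x' j * (2 * A * v α j) * hpat α
          = ∑ j, ∑ α, (v η j - x' j) * (2 * A * v α j) * hpat α := by
        rw [← Finset.sum_sub_distrib]
        refine Finset.sum_congr rfl fun j _ => ?_
        rw [← Finset.sum_sub_distrib]
        exact Finset.sum_congr rfl fun α _ => by ring
      have hsingle : ∑ j, ∑ α, (v η j - x' j) * (2 * A * v α j) * hpat α = 8 * A := by
        rw [Finset.sum_eq_single j0]
        · have hx0 : x' j0 = -(v η j0) := Function.update_self _ _ _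
          have hterm : ∀ α : Fin H, (v η j0 - x' j0) * (2 * A * v α j0) * hpat α
              = (4 * A * v η j0) * (v α j0 * hpat α) := by
            intro α; rw [hx0]; ring
          rw [Finset.sum_congr rfl fun α _ => hterm α, ← Finset.mul_sum, hT]
          linear_combination 8 * A * hsq
        · intro b _ hb
          have hxb : x' b = v η b := Function.update_of_ne hb _ _
          rw [hxb]
          simp
        · intro h; exact absurd (Finset.mem_univ j0) h
      linarith
    linarith
  · -- hidden flips
    intro α0
    set d : Fin H → ℝ :=
      fun α => (∑ j, v η j * (2 * A * v α j)) + 2 * A * (lam α - (V : ℝ)) with hd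
    have hE : ∀ g : Fin H → ℝ, raEnergy A lam v (v η) g = -∑ α, d α * g α := by
      intro g
      unfold raEnergy
      rw [Finset.sum_comm]
      have hterm : ∀ α : Fin H, ((∑ j, v η j * (2 * A * v α j)) + 2 * A * (lam α - (V : ℝ))) * g α
          = (∑ j, v η j * (2 * A * v α j) * g α) + (2 * A * (lam α - (V : ℝ))) * g α := by
        intro α; rw [add_mul, Finset.sum_mul]
      simp only [hd]
      rw [Finset.sum_congr rfl fun α _ => hterm α, Finset.sum_add_distrib, neg_add]
      ring
    set h' := Function.update hpat α0 (-(hpat α0)) with hh'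
    have h2 : ∑ α, d α * (hpat α - h' α) = d α0 * (2 * hpat α0) := by
      rw [Finset.sum_eq_single α0]
      · rw [hh', Function.update_self]; ring
      · intro b _ hb; rw [hh', Function.update_of_ne hb]; ring
      · intro h; exact absurd (Finset.mem_univ α0) h
    have h3 : ∑ α, d α * hpat α - ∑ α, d α * h' α
        = ∑ α, d α * (hpat α - h' α) := by
      rw [← Finset.sum_sub_distrib]
      exact Finset.sum_congr rfl fun α _ => by ring
    have hdiff : raEnergy A lam v (v η) h' - raEnergy A lam v (v η) hpat
        = 2 * hpat α0 * d α0 := by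
      rw [hE, hE]
      linarith
    by_cases hcase : α0 = η
    · subst hcase
      have hpe : hpat α0 = 1 := by simp [hpat]
      have hS : ∑ j, v α0 j * (2 * A * v α0 j) = 2 * A * (V : ℝ) := by
        have hterm : ∀ j : Fin V, v α0 j * (2 * A * v α0 j) = 2 * A := by
          intro j; rcases hpm α0 j with h | h <;> rw [h] <;> ring
        rw [Finset.sum_congr rfl fun j _ => hterm j, Finset.sum_const,
          Finset.card_univ, Fintype.card_fin, nsmul_eq_mul]
        ring
      have hdval : d α0 = 2 * A * lam α0 := by
        simp only [hd, hS]; ring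
      have hl := (hlam α0).1
      rw [hpe, hdval] at hdiff
      nlinarith
    · have hpe : hpat α0 = -1 := by simp [hpat, hcase]
      have hne : v α0 ≠ v η := fun h => hcase (hdist h)
      have hSle : ∑ j, v α0 j * v η j ≤ (V : ℝ) - 2 := ra_overlap_le v hpm hne
      have hS : ∑ j, v η j * (2 * A * v α0 j) = 2 * A * ∑ j, v α0 j * v η j := by
        rw [Finset.mul_sum]
        exact Finset.sum_congr rfl fun j _ => by ring
      have hdval : d α0 = 2 * A * (∑ j, v α0 j * v η j) + 2 * A * (lam α0 - (V : ℝ)) := by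
        simp only [hd, hS]
      have hl := (hlam α0).2
      rw [hpe, hdval] at hdiff
      nlinarith [mul_nonneg hA.le (show (0 : ℝ) ≤ (V : ℝ) - 2 - ∑ j, v α0 j * v η j by linarith),
        mul_pos hA (show (0 : ℝ) < 5 / 4 - lam α0 by linarith)]
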